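/- Let ψ_{1i}, ψ_{0i} ∈ ℝ^p for i = 1,...,N be fixed vectors and r1 ∈ (0,1), r0 = 1−r1. Then the matrix r1^{-1}·Cov_N(ψ_{1i}) + r0^{-1}·Cov_N(ψ_{0i}) − Cov_N(ψ_{1i} − ψ_{0i}) equals Cov_N(√(r0/r1)·ψ_{1i} + √(r1/r0)·ψ_{0i}) and is therefore positive semidefinite. -/

import Mathlib

/-- Finite population covariance matrix (divisor `N − 1`) of vectors `v 1, …, v N ∈ ℝ^p`. -/
noncomputable def covN {N p : ℕ} (v : Fin N → Fin p → ℝ) : Matrix (Fin p) (Fin p) ℝ :=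
  fun k l =>
    (∑ j, (v j k - (∑ i, v i k) / (N : ℝ)) * (v j l - (∑ i, v i l) / (N : ℝ)))
      / ((N : ℝ) - 1)

lemma sum_sq_expand {N p : ℕ} (d : Fin N → Fin p → ℝ) (x : Fin p → ℝ) :
    ∑ j, (∑ k, x k * d j k) ^ 2
      = ∑ k, ∑ l, x k * x l * ∑ j, d j k * d j l := by
  simp_rw [sq, Finset.sum_mul_sum]
  rw [Finset.sum_comm]
  refine Finset.sum_congr rfl fun k _ => ?_
  rw [Finset.sum_comm]
  refine Finset.sum_congr rfl fun l _ => ?_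
  rw [Finset.mul_sum]
  exact Finset.sum_congr rfl fun j _ => by ring

lemma quad_expand {N p : ℕ} (d : Fin N → Fin p → ℝ) (x : Fin p → ℝ) (c : ℝ) :
    ∑ k, x k * ∑ l, ((∑ j, d j k * d j l) / c * x l)
      = (∑ j, (∑ k, x k * d j k) ^ 2) / c := by
  rw [sum_sq_expand]
  conv_rhs => rw [Finset.sum_div]
  refine Finset.sum_congr rfl fun k _ => ?_
  conv_rhs => rw [Finset.sum_div]
  rw [Finset.mul_sum]
  refine Finset.sum_congr rfl fun l _ => ?_
  ring

lemma covN_posSemidef {N p : ℕ} (hN : 2 ≤ N) (v : Fin N → Fin p → ℝ) :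
    (covN v).PosSemidef := by
  have h2N : (2:ℝ) ≤ (N:ℝ) := by exact_mod_cast hN
  have hc : (0:ℝ) ≤ (N : ℝ) - 1 := by linarith
  rw [Matrix.posSemidef_iff_dotProduct_mulVec]
  constructor
  · ext k l
    simp only [Matrix.conjTranspose_apply, star_trivial, covN]
    congr 1
    exact Finset.sum_congr rfl fun j _ => mul_comm _ _
  · intro x
    have key : dotProduct (star x) ((covN v).mulVec x)
        = (∑ j, (∑ k, x k * (v j k - (∑ i, v i k) / (N : ℝ))) ^ 2) / ((N : ℝ) - 1) := by
      simp only [dotProduct, Matrix.mulVec, star_trivial, Pi.star_apply, covN]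
      exact quad_expand (fun j m => v j m - (∑ i, v i m) / (N : ℝ)) x ((N : ℝ) - 1)
    rw [key]
    exact div_nonneg (Finset.sum_nonneg fun j _ => sq_nonneg _) hc

theorem conservative_covariance_identity (N p : ℕ) (hN : 2 ≤ N)
    (ψ1 ψ0 : Fin N → Fin p → ℝ) (r1 : ℝ) (hr0 : 0 < r1) (hr1 : r1 < 1) :
    (r1⁻¹ • covN ψ1 + (1 - r1)⁻¹ • covN ψ0 - covN (fun i => ψ1 i - ψ0 i)
        = covN (fun i =>
            Real.sqrt ((1 - r1) / r1) • ψ1 i + Real.sqrt (r1 / (1 - r1)) • ψ0 i))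
    ∧ (r1⁻¹ • covN ψ1 + (1 - r1)⁻¹ • covN ψ0
        - covN (fun i => ψ1 i - ψ0 i)).PosSemidef := by
  have hr0' : (0:ℝ) < 1 - r1 := by linarith
  set a := Real.sqrt ((1 - r1) / r1) with ha
  set b := Real.sqrt (r1 / (1 - r1)) with hb
  have haa : a * a = (1 - r1) / r1 := Real.mul_self_sqrt (by positivity)
  have hbb : b * b = r1 / (1 - r1) := Real.mul_self_sqrt (by positivity)
  have hab : a * b = 1 := by
    rw [ha, hb, ← Real.sqrt_mul (by positivity)]
    rw [div_mul_div_comm, mul_comm]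
    rw [div_self (by positivity), Real.sqrt_one]
  have h2N : (2:ℝ) ≤ (N:ℝ) := by exact_mod_cast hN
  have hNpos : (0:ℝ) < (N:ℝ) - 1 := by linarith
  have hNne : ((N:ℝ) - 1) ≠ 0 := hNpos.ne'
  have hmain : r1⁻¹ • covN ψ1 + (1 - r1)⁻¹ • covN ψ0 - covN (fun i => ψ1 i - ψ0 i)
      = covN (fun i => a • ψ1 i + b • ψ0 i) := by
    ext k l
    simp only [Matrix.sub_apply, Matrix.add_apply, Matrix.smul_apply, smul_eq_mul]
    set e1 : Fin N → Fin p → ℝ := fun j m => ψ1 j m - (∑ i, ψ1 i m) / (N : ℝ) with he1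
    set e0 : Fin N → Fin p → ℝ := fun j m => ψ0 j m - (∑ i, ψ0 i m) / (N : ℝ) with he0
    set A := ∑ j, e1 j k * e1 j l with hA
    set B := ∑ j, e1 j k * e0 j l with hB
    set C := ∑ j, e0 j k * e1 j l with hC
    set D := ∑ j, e0 j k * e0 j l with hD
    have center_diff : ∀ (j : Fin N) (m : Fin p),
        (ψ1 j m - ψ0 j m) - (∑ i, (ψ1 i m - ψ0 i m)) / (N : ℝ) = e1 j m - e0 j m := by
      intro j m
      rw [Finset.sum_sub_distrib, sub_div, he1, he0]
      ring
    have center_combo : ∀ (j : Fin N) (m : Fin p),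
        (a * ψ1 j m + b * ψ0 j m) - (∑ i, (a * ψ1 i m + b * ψ0 i m)) / (N : ℝ)
          = a * e1 j m + b * e0 j m := by
      intro j m
      rw [Finset.sum_add_distrib, ← Finset.mul_sum, ← Finset.mul_sum, add_div,
        mul_div_assoc, mul_div_assoc, he1, he0]
      ring
    have h1 : covN ψ1 k l = A / ((N:ℝ) - 1) := rfl
    have h0 : covN ψ0 k l = D / ((N:ℝ) - 1) := rfl
    have hdiff : covN (fun i => ψ1 i - ψ0 i) k l = (A - B - C + D) / ((N:ℝ) - 1) := by
      unfold covN
      congr 1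
      calc ∑ j, ((ψ1 j - ψ0 j) k - (∑ i, (ψ1 i - ψ0 i) k) / (N : ℝ))
              * ((ψ1 j - ψ0 j) l - (∑ i, (ψ1 i - ψ0 i) l) / (N : ℝ))
          = ∑ j, (e1 j k * e1 j l - e1 j k * e0 j l - e0 j k * e1 j l + e0 j k * e0 j l) := by
            refine Finset.sum_congr rfl fun j _ => ?_
            simp only [Pi.sub_apply]
            rw [center_diff j k, center_diff j l]
            ring
        _ = A - B - C + D := by
            rw [hA, hB, hC, hD]
            simp [Finset.sum_add_distrib, Finset.sum_sub_distrib]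
    have hcombo : covN (fun i => a • ψ1 i + b • ψ0 i) k l
        = (a * a * A + a * b * B + a * b * C + b * b * D) / ((N:ℝ) - 1) := by
      unfold covN
      congr 1
      calc ∑ j, ((a • ψ1 j + b • ψ0 j) k - (∑ i, (a • ψ1 i + b • ψ0 i) k) / (N : ℝ))
              * ((a • ψ1 j + b • ψ0 j) l - (∑ i, (a • ψ1 i + b • ψ0 i) l) / (N : ℝ))
          = ∑ j, (a * a * (e1 j k * e1 j l) + a * b * (e1 j k * e0 j l)
              + a * b * (e0 j k * e1 j l) + b * b * (e0 j k * e0 j l)) := by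
            refine Finset.sum_congr rfl fun j _ => ?_
            simp only [Pi.add_apply, Pi.smul_apply, smul_eq_mul]
            rw [center_combo j k, center_combo j l]
            ring
        _ = a * a * A + a * b * B + a * b * C + b * b * D := by
            rw [hA, hB, hC, hD]
            simp [Finset.sum_add_distrib, Finset.mul_sum]
    rw [h1, h0, hdiff, hcombo, haa, hbb, hab]
    field_simp
    ring
  refine ⟨hmain, ?_⟩
  rw [hmain]
  exact covN_posSemidef hN _
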